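/- Let A be a finite-dimensional evolution algebra and I an ideal of A having the extension property. Then I is nilpotent if and only if I ⊆ rad(A). -/

import Mathlib

open Submodule

section EvolutionPreamble

/-- The set of `k`-th generation descendants of a vertex in a directed graph
given by an edge relation `E`; `Dk E 0 i = {i}`. -/
def Dk {V : Type*} (E : V → V → Prop) : ℕ → V → Set V
  | 0, i => {i}
  | n + 1, i => {k | ∃ j ∈ Dk E n i, E j k}

/-- A vertex is cyclic if there is a (possibly trivial) path from it to a vertex
lying on a cycle. -/
def IsCyclicVertex {V : Type*} (E : V → V → Prop) (i : V) : Prop :=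
  ∃ j, Relation.ReflTransGen E i j ∧ Relation.TransGen E j j

/-- Connectedness of a directed graph: every nontrivial partition of the
vertex set is crossed by an edge (in one direction or the other). -/
def GraphConnected {V : Type*} (E : V → V → Prop) : Prop :=
  ∀ s : Set V, s.Nonempty → sᶜ.Nonempty → ∃ x ∈ s, ∃ y ∈ sᶜ, E x y ∨ E y x

variable {K : Type*} [Field K] {A : Type*} [NonUnitalNonAssocRing A]
  [Module K A] [SMulCommClass K A A] [IsScalarTower K A A] {ι : Type*}

/-- A basis is natural if distinct basis vectors multiply to zero. -/
def IsNaturalBasis (B : Module.Basis ι K A) : Prop := ∀ i j, i ≠ j → B i * B j = 0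

/-- Edge relation of the directed graph `Γ(A,B)` associated to an evolution
algebra `A` with natural basis `B`: `(i,k)` is an edge iff the structure
constant `w_{ik}` is nonzero. -/
def edge (B : Module.Basis ι K A) (i k : ι) : Prop := B.repr (B i * B i) k ≠ 0

/-- First-generation descendants in `Γ(A,B)`. -/
def D1 (B : Module.Basis ι K A) (i : ι) : Set ι := {k | edge B i k}

/-- The increasing chain of index sets `λ_k(B)`: `λ_0 = ∅`,
`λ_{k+1}(B) = {i : D¹(i) ⊆ λ_k(B)}`.  In particular
`λ_1(B) = {i : e_i² = 0}`. -/
def lam (B : Module.Basis ι K A) : ℕ → Set ι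
  | 0 => ∅
  | n + 1 => {i | ∀ k, edge B i k → k ∈ lam B n}

/-- `I` is a (two-sided) ideal. -/
def IsIdeal (I : Submodule K A) : Prop := ∀ x ∈ I, ∀ a : A, x * a ∈ I ∧ a * x ∈ I

/-- The absorption property: `xA ⊆ I` implies `x ∈ I`. -/
def HasAbsorption (I : Submodule K A) : Prop := ∀ x : A, (∀ a : A, x * a ∈ I) → x ∈ I

/-- The absorption radical: intersection of all ideals with the absorption property. -/
def rad (K : Type*) (A : Type*) [Field K] [NonUnitalNonAssocRing A]
    [Module K A] [SMulCommClass K A A] [IsScalarTower K A A] : Submodule K A :=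
  sInf {I : Submodule K A | IsIdeal I ∧ HasAbsorption I}

lemma rad_isIdeal : IsIdeal (rad K A) := by
  intro x hx a
  rw [rad, Submodule.mem_sInf] at hx
  constructor <;>
    · rw [rad, Submodule.mem_sInf]
      intro I hI
      first
        | exact (hI.1 x (hx I hI) a).1
        | exact (hI.1 x (hx I hI) a).2

/-- The annihilator `ann(A) = {x : xA = Ax = 0}` as a submodule. -/
def annSub (K : Type*) (A : Type*) [Field K] [NonUnitalNonAssocRing A]
    [Module K A] [SMulCommClass K A A] [IsScalarTower K A A] : Submodule K A where
  carrier := {x | ∀ a : A, x * a = 0 ∧ a * x = 0}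
  add_mem' := by
    intro x y hx hy a
    constructor
    · rw [add_mul, (hx a).1, (hy a).1, add_zero]
    · rw [mul_add, (hx a).2, (hy a).2, add_zero]
  zero_mem' := by intro a; simp
  smul_mem' := by
    intro c x hx a
    constructor
    · rw [smul_mul_assoc, (hx a).1, smul_zero]
    · rw [mul_smul_comm, (hx a).2, smul_zero]

/-- The upper annihilating series: `ann⁰(A) = 0`,
`annⁱ⁺¹(A) = {x : xA ∪ Ax ⊆ annⁱ(A)}`. -/
def annSeries (K : Type*) (A : Type*) [Field K] [NonUnitalNonAssocRing A]
    [Module K A] [SMulCommClass K A A] [IsScalarTower K A A] : ℕ → Submodule K A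
  | 0 => ⊥
  | n + 1 =>
    { carrier := {x | ∀ a : A, x * a ∈ annSeries K A n ∧ a * x ∈ annSeries K A n}
      add_mem' := by
        intro x y hx hy a
        constructor
        · rw [add_mul]; exact add_mem (hx a).1 (hy a).1
        · rw [mul_add]; exact add_mem (hx a).2 (hy a).2
      zero_mem' := by intro a; simp
      smul_mem' := by
        intro c x hx a
        constructor
        · rw [smul_mul_assoc]; exact smul_mem _ c (hx a).1
        · rw [mul_smul_comm]; exact smul_mem _ c (hx a).2 }

/-- The annihilator stabilizing index `asi(A)`. -/
noncomputable def asi (K : Type*) (A : Type*) [Field K] [NonUnitalNonAssocRing A]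
    [Module K A] [SMulCommClass K A A] [IsScalarTower K A A] : ℕ :=
  sInf {q : ℕ | annSeries K A q = annSeries K A (q + 1)}

/-- Product of two submodules (span of pairwise products). -/
def smulSub (I J : Submodule K A) : Submodule K A :=
  Submodule.span K (Set.image2 (· * ·) (I : Set A) (J : Set A))

/-- Powers of a subalgebra/ideal, with `N^{k} = Σ_{i+j=k, i,j ≥ 1} Nⁱ Nʲ`. -/
def npow (I : Submodule K A) : ℕ → Submodule K A
  | 0 => ⊥
  | 1 => I
  | n + 2 => ⨆ i : Fin (n + 1), smulSub (npow I (i.1 + 1)) (npow I (n + 1 - i.1))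
  termination_by n => n
  decreasing_by
  · have := i.isLt; omega
  · have := i.isLt; omega

/-- `I` is an ideal of the subalgebra `N`. -/
def IsIdealIn (N I : Submodule K A) : Prop :=
  I ≤ N ∧ ∀ x ∈ I, ∀ a ∈ N, x * a ∈ I ∧ a * x ∈ I

/-- The (sub)algebra `N` is decomposable: it is the direct sum of two nonzero
ideals of `N`. -/
def DecomposableIn (N : Submodule K A) : Prop :=
  ∃ I J : Submodule K A, IsIdealIn N I ∧ IsIdealIn N J ∧ I ≠ ⊥ ∧ J ≠ ⊥ ∧
    I ⊓ J = ⊥ ∧ I ⊔ J = N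

/-- Multiplication inside an ideal `N` (an ideal is closed under products). -/
def subMul {N : Submodule K A} (hN : IsIdeal N) (x y : N) : N :=
  ⟨(x : A) * (y : A), (hN x x.2 y).1⟩

/-- The induced multiplication on the quotient `A ⧸ I` by an ideal `I`. -/
def quotMul (I : Submodule K A) (hI : IsIdeal I) (x y : A ⧸ I) : A ⧸ I :=
  Quotient.liftOn₂ x y (fun a b => Submodule.Quotient.mk (a * b)) (by
    intro a b a' b' ha hb
    have ha' : a - a' ∈ I := (Submodule.quotientRel_def I).mp ha
    have hb' : b - b' ∈ I := (Submodule.quotientRel_def I).mp hb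
    refine (Submodule.Quotient.eq I).mpr ?_
    have h : a * b - a' * b' = a * (b - b') + (a - a') * b' := by
      rw [mul_sub, sub_mul]; abel
    rw [h]
    exact add_mem (hI _ hb' a).2 (hI _ ha' b').1)

/-- Edge relation of the graph associated to the quotient evolution algebra
`A ⧸ I` relative to a basis `C`. -/
def edgeQ {κ : Type*} (I : Submodule K A) (hI : IsIdeal I)
    (C : Module.Basis κ K (A ⧸ I)) (i k : κ) : Prop :=
  C.repr (quotMul I hI (C i) (C i)) k ≠ 0

end EvolutionPreamble


section Aux
variable {K : Type*} [Field K] {A : Type*} [NonUnitalNonAssocRing A]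
  [Module K A] [SMulCommClass K A A] [IsScalarTower K A A] {ι : Type*}

set_option linter.unusedSectionVars false

lemma npowE_zero (I : Submodule K A) : npow I 0 = ⊥ := by rw [npow]

lemma npowE_one (I : Submodule K A) : npow I 1 = I := by rw [npow]

lemma npowE_add_two (I : Submodule K A) (n : ℕ) :
    npow I (n + 2) = ⨆ i : Fin (n + 1), smulSub (npow I (i.1 + 1)) (npow I (n + 1 - i.1)) := by
  rw [npow]

lemma annSeriesE_zero : annSeries K A 0 = ⊥ := by rw [annSeries]

lemma smulSub_le {I J : Submodule K A} {N : Submodule K A}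
    (h : ∀ x ∈ I, ∀ y ∈ J, x * y ∈ N) : smulSub I J ≤ N := by
  rw [smulSub, span_le]
  rintro z ⟨x, hx, y, hy, rfl⟩
  exact h x hx y hy

lemma mul_mem_smulSub {I J : Submodule K A} {x y : A} (hx : x ∈ I) (hy : y ∈ J) :
    x * y ∈ smulSub I J :=
  subset_span ⟨x, hx, y, hy, rfl⟩

lemma mem_annSeries_succ {x : A} {n : ℕ} :
    x ∈ annSeries K A (n + 1) ↔
      ∀ a : A, x * a ∈ annSeries K A n ∧ a * x ∈ annSeries K A n := Iff.rfl

lemma annSeries_le_succ (n : ℕ) : annSeries K A n ≤ annSeries K A (n + 1) := by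
  induction n with
  | zero => exact bot_le
  | succ n ih =>
    intro x hx a
    exact ⟨ih (hx a).1, ih (hx a).2⟩

/-- Commutativity from a natural basis. -/
lemma comm_of_natural [Fintype ι] (B : Module.Basis ι K A) (hB : IsNaturalBasis B)
    (x y : A) : x * y = y * x := by
  have h : LinearMap.mul K A = (LinearMap.mul K A).flip := by
    apply B.ext; intro i
    apply B.ext; intro j
    simp only [LinearMap.mul_apply', LinearMap.flip_apply]
    rcases eq_or_ne i j with rfl | hij
    · rfl
    · rw [hB i j hij, hB j i hij.symm]
  calc x * y = LinearMap.mul K A x y := rfl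
    _ = (LinearMap.mul K A).flip x y := by rw [← h]
    _ = y * x := rfl

lemma npow_le_base {X : Submodule K A} {m : ℕ} (hX : X ≤ annSeries K A m) :
    ∀ k, npow X k ≤ annSeries K A m := by
  intro k
  induction k using Nat.strong_induction_on with
  | _ k ih =>
    match k with
    | 0 => rw [npowE_zero]; exact bot_le
    | 1 => rw [npowE_one]; exact hX
    | (n+2) =>
      rw [npowE_add_two]
      apply iSup_le
      intro i
      apply smulSub_le
      intro x hx y hy
      have hx' : x ∈ annSeries K A m := ih (i.1 + 1) (by have := i.isLt; omega) hx
      match m with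
      | 0 =>
        simp only [annSeries, Submodule.mem_bot] at hx' ⊢
        rw [hx', zero_mul]
      | (s+1) => exact annSeries_le_succ s (hx' y).1

/-- Products of `2 ^ j` elements of a submodule contained in `annSeries (m + j)`
land in `annSeries m`. -/
lemma npow_le_annSeries (X : Submodule K A) :
    ∀ j m k, 2 ^ j ≤ k → X ≤ annSeries K A (m + j) →
      npow X k ≤ annSeries K A m := by
  intro j
  induction j with
  | zero =>
    intro m k _ hX
    exact npow_le_base (by simpa using hX) k
  | succ j ihj =>
    intro m k h2 hX
    have h2k : 2 ≤ k := by
      have : 2 ^ 1 ≤ 2 ^ (j + 1) := Nat.pow_le_pow_right (by norm_num) (by omega)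
      simpa using this.trans h2
    match k, h2k with
    | (n+2), _ =>
      rw [npowE_add_two]
      apply iSup_le
      intro i
      apply smulSub_le
      intro x hx y hy
      have hsum : (i.1 + 1) + (n + 1 - i.1) = n + 2 := by have := i.isLt; omega
      have hpow : 2 ^ (j+1) = 2 ^ j + 2 ^ j := by ring
      have hcases : 2 ^ j ≤ i.1 + 1 ∨ 2 ^ j ≤ n + 1 - i.1 := by omega
      have hX' : X ≤ annSeries K A ((m + 1) + j) := by
        rwa [show m + 1 + j = m + (j+1) by omega]
      rcases hcases with hcase | hcase
      · have hx' : x ∈ annSeries K A (m + 1) := ihj (m+1) (i.1+1) hcase hX' hx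
        exact (hx' y).1
      · have hy' : y ∈ annSeries K A (m + 1) := ihj (m+1) (n+1-i.1) hcase hX' hy
        exact (hy' x).2

lemma npow_le_self {I : Submodule K A} (hI : IsIdeal I) : ∀ n, npow I n ≤ I := by
  intro n
  induction n using Nat.strong_induction_on with
  | _ n ih =>
    match n with
    | 0 => rw [npowE_zero]; exact bot_le
    | 1 => rw [npowE_one]
    | (n+2) =>
      rw [npowE_add_two]
      apply iSup_le
      intro i
      apply smulSub_le
      intro x hx y _
      exact (hI x (ih (i.1+1) (by have := i.isLt; omega) hx) y).1

lemma smulSub_npow_le {I : Submodule K A} (n : ℕ) :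
    smulSub (npow I (n + 1)) (npow I 1) ≤ npow I (n + 2) := by
  rw [npowE_add_two]
  have h := le_iSup (fun i : Fin (n+1) => smulSub (npow I (i.1 + 1)) (npow I (n + 1 - i.1)))
    ⟨n, by omega⟩
  simpa [Nat.add_sub_cancel_left, show n + 1 - n = 1 by omega] using h

/-- For `x` in the span of a sub-family of a natural basis, multiplication by any
element of `A` can be replaced by multiplication by an element of the span. -/
lemma mul_reduce [Fintype ι] (B : Module.Basis ι K A) (hB : IsNaturalBasis B) (Λ' : Set ι)
    {x : A} (hx : x ∈ Submodule.span K (B '' Λ')) (a : A) :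
    ∃ a' ∈ Submodule.span K (B '' Λ'), x * a = x * a' := by
  classical
  have hxk : ∀ k ∉ Λ', x * B k = 0 := by
    intro k hk
    induction hx using Submodule.span_induction with
    | mem b hb =>
      obtain ⟨j, hj, rfl⟩ := hb
      exact hB j k (fun h => hk (h ▸ hj))
    | zero => rw [zero_mul]
    | add y z _ _ hy hz => rw [add_mul, hy, hz, add_zero]
    | smul c y _ hy => rw [smul_mul_assoc, hy, smul_zero]
  refine ⟨∑ k, if k ∈ Λ' then B.repr a k • B k else 0, ?_, ?_⟩
  · apply sum_mem
    intro k _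
    split_ifs with h
    · exact smul_mem _ _ (subset_span ⟨k, h, rfl⟩)
    · exact zero_mem _
  · conv_lhs => rw [← B.sum_repr a]
    rw [Finset.mul_sum, Finset.mul_sum]
    apply Finset.sum_congr rfl
    intro k _
    split_ifs with h
    · rfl
    · rw [mul_zero, mul_smul_comm, hxk k h, smul_zero]

end Aux

/-- An ideal with the extension property is nilpotent iff it is contained in
the absorption radical. -/
theorem stmt13 {K : Type*} [Field K] {A : Type*} [NonUnitalNonAssocRing A]
    [Module K A] [SMulCommClass K A A] [IsScalarTower K A A]
    {ι : Type*} [Fintype ι] (B₀ : Module.Basis ι K A) (hB₀ : IsNaturalBasis B₀)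
    (I : Submodule K A) (hI : IsIdeal I)
    (hext : ∃ B : Module.Basis ι K A, IsNaturalBasis B ∧
      ∃ Λ' : Set ι, I = Submodule.span K (B '' Λ')) :
    (∃ k : ℕ, 0 < k ∧ npow I k = ⊥) ↔ I ≤ rad K A := by
  constructor
  · rintro ⟨k, hk, hnil⟩
    obtain ⟨B, hBnat, Λ', hIeq⟩ := hext
    rw [rad]
    apply le_sInf
    rintro J ⟨hJid, hJabs⟩
    have key : ∀ d, npow I (k - d) ≤ J := by
      intro d
      induction d with
      | zero => rw [Nat.sub_zero, hnil]; exact bot_le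
      | succ d ih =>
        rcases Nat.eq_zero_or_pos (k - (d+1)) with h0 | hpos
        · rw [h0, npowE_zero]; exact bot_le
        · obtain ⟨n, hn⟩ : ∃ n, k - (d+1) = n + 1 := ⟨k - (d+1) - 1, by omega⟩
          have hkd : k - d = n + 2 := by omega
          rw [hkd] at ih
          rw [hn]
          intro x hx
          apply hJabs
          intro a
          have hxI : x ∈ Submodule.span K (B '' Λ') := by
            rw [← hIeq]; exact npow_le_self hI _ hx
          obtain ⟨a', ha', heq⟩ := mul_reduce B hBnat Λ' hxI a
          rw [heq]
          have h1 : x * a' ∈ npow I (n + 2) := by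
            apply smulSub_npow_le n
            exact mul_mem_smulSub hx (by rw [npowE_one, hIeq]; exact ha')
          exact ih h1
    have h := key (k - 1)
    rwa [show k - (k-1) = 1 by omega, npowE_one] at h
  · intro hle
    have hcomm := comm_of_natural B₀ hB₀
    have hfin : Module.Finite K A := Module.Finite.of_basis B₀
    have hnoe : IsNoetherian K A := inferInstance
    obtain ⟨q, hq⟩ : ∃ q, annSeries K A q = annSeries K A (q+1) := by
      obtain ⟨n, hn⟩ := monotone_stabilizes_iff_noetherian.mpr hnoe
        ⟨annSeries K A, monotone_nat_of_le_succ annSeries_le_succ⟩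
      exact ⟨n, hn (n+1) (by omega)⟩
    have hmem : annSeries K A q ∈ {J : Submodule K A | IsIdeal J ∧ HasAbsorption J} := by
      constructor
      · intro x hx a
        rw [hq] at hx
        exact (mem_annSeries_succ.mp hx) a
      · intro x hxa
        rw [hq]
        exact mem_annSeries_succ.mpr fun a => ⟨hxa a, by rw [hcomm a x]; exact hxa a⟩
    have hrad : rad K A ≤ annSeries K A q := sInf_le hmem
    have hIann : I ≤ annSeries K A (0 + q) := by
      rw [Nat.zero_add]; exact hle.trans hrad
    refine ⟨2 ^ q, Nat.pow_pos (n := q) (by norm_num), ?_⟩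
    have h := npow_le_annSeries I q 0 (2 ^ q) le_rfl hIann
    rw [annSeriesE_zero] at h
    exact le_bot_iff.mp h
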